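/- In the Voronoi-cell setup along the axis of a hyperbolic isometry ξ (minimal displacement L ≥ 300δ, orbit points xᵢ with projections pᵢ to the axis τ, Voronoi cells Dᵢ = {x : |x xᵢ| ≤ |x xⱼ| for all j}), if x ∈ Dᵢ and p is a projection of x to τ, then p lies between the points p_{i−} and p_{i+} adjacent to pᵢ; in particular |pᵢ p| ≤ L + 56δ + ε. -/
import Mathlib


open Metric Set

variable {X : Type*} [MetricSpace X]

/-- Four-point condition for δ-hyperbolicity. -/
def FourPointHyp (X : Type*) [MetricSpace X] (δ : ℝ) : Prop :=
  ∀ x y z w : X,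
    dist x y + dist z w ≤ max (dist x z + dist y w) (dist y z + dist x w) + 2 * δ

/-- `s` is a geodesic segment from `a` to `b`. -/
def IsGeodSegment {X : Type*} [MetricSpace X] (a b : X) (s : Set X) : Prop :=
  ∃ f : ℝ → X, f 0 = a ∧ f (dist a b) = b ∧
    (∀ u ∈ Icc (0:ℝ) (dist a b), ∀ v ∈ Icc (0:ℝ) (dist a b),
      dist (f u) (f v) = |u - v|) ∧
    s = f '' Icc (0:ℝ) (dist a b)

/-- `X` is a geodesic space. -/
def IsGeodesicSpace (X : Type*) [MetricSpace X] : Prop :=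
  ∀ a b : X, ∃ s : Set X, IsGeodSegment a b s

/-- `τ : ℝ → X` is a geodesic line. -/
def IsGeodLine (τ : ℝ → X) : Prop := ∀ u v : ℝ, dist (τ u) (τ v) = |u - v|

/-- An isometry is hyperbolic if the orbit map `n ↦ ξⁿ(x)` is a quasi-isometric
embedding of `ℤ` into `X`. -/
def IsHypIsom (ξ : X ≃ᵢ X) : Prop :=
  ∃ x : X, ∃ A : ℝ, 0 < A ∧ ∃ B : ℝ, ∀ m n : ℤ,
    A * |(m : ℝ) - (n : ℝ)| - B ≤ dist ((ξ ^ m) x) ((ξ ^ n) x)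

/-- An axis of `ξ`: a geodesic line joining the two fixed points of `ξ` at infinity,
equivalently a geodesic line whose image is at finite Hausdorff distance from its
`ξ`-image. -/
def IsAxis (ξ : X ≃ᵢ X) (τ : ℝ → X) : Prop :=
  IsGeodLine τ ∧ ∃ C : ℝ,
    (∀ t : ℝ, infDist (ξ (τ t)) (range τ) ≤ C) ∧
    (∀ t : ℝ, infDist (τ t) (range fun s => ξ (τ s)) ≤ C)

/-- The orbit points `x₁ = O`, `xᵢ = ξ^{i-1}(O)` for `i > 0`, `xᵢ = ξ^{i}(O)` for
`i < 0`. -/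
noncomputable def orbitPt (ξ : X ≃ᵢ X) (O : X) (i : ℤ) : X :=
  if 0 < i then (ξ ^ (i - 1)) O else (ξ ^ i) O

/-- The Voronoi cell `Dᵢ` of the orbit point `xᵢ`. -/
noncomputable def vorCell (ξ : X ≃ᵢ X) (O : X) (i : ℤ) : Set X :=
  {y : X | ∀ j : ℤ, j ≠ 0 → dist y (orbitPt ξ O i) ≤ dist y (orbitPt ξ O j)}

namespace Stmt12Aux

lemma my_le_infDist {x : X} {s : Set X} (hs : s.Nonempty) {b : ℝ} (h : ∀ z ∈ s, b ≤ dist x z) :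
    b ≤ infDist x s := by
  rw [infDist_eq_iInf]
  have : Nonempty s := hs.to_subtype
  exact le_ciInf fun z => h z z.2

/-- Projections onto a geodesic line exist. -/
lemma geod_min {σ : ℝ → X} (hσ : IsGeodLine σ) (x : X) :
    ∃ c : ℝ, (∀ t, dist x (σ c) ≤ dist x (σ t)) ∧ dist x (σ c) = infDist x (range σ) := by
  have hcont : Continuous fun t => dist x (σ t) := by
    have hiso : Isometry σ := Isometry.of_dist_eq (by intro u v; rw [hσ u v, Real.dist_eq])
    exact continuous_const.dist hiso.continuous
  set M := dist x (σ 0) with hM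
  obtain ⟨c, hcmem, hcmin⟩ := (isCompact_Icc (a := -(2*M+1)) (b := 2*M+1)).exists_isMinOn
    ⟨0, by constructor <;> nlinarith [dist_nonneg (x := x) (y := σ 0)]⟩ hcont.continuousOn
  have hmin : ∀ t, dist x (σ c) ≤ dist x (σ t) := by
    intro t
    by_cases ht : t ∈ Icc (-(2*M+1)) (2*M+1)
    · exact hcmin ht
    · have h0 : dist x (σ c) ≤ M := hcmin (⟨by nlinarith [dist_nonneg (x := x) (y := σ 0)],
        by nlinarith [dist_nonneg (x := x) (y := σ 0)]⟩ : (0:ℝ) ∈ Icc _ _)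
      have habs : 2*M+1 < |t| := by
        rcases abs_cases t with ⟨h1, _⟩ | ⟨h1, _⟩
        · rw [h1]
          by_contra hc2
          exact ht ⟨by nlinarith [dist_nonneg (x := x) (y := σ 0)], by linarith⟩
        · rw [h1]
          by_contra hc2
          exact ht ⟨by linarith, by nlinarith [dist_nonneg (x := x) (y := σ 0)]⟩
      have : dist (σ 0) (σ t) ≤ dist (σ 0) x + dist x (σ t) := dist_triangle _ _ _
      rw [hσ 0 t] at this
      have habs2 : |t| = |(0:ℝ) - t| := by rw [zero_sub, abs_neg]
      rw [dist_comm (σ 0) x] at this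
      linarith [habs2 ▸ this]
  refine ⟨c, hmin, le_antisymm ?_ (infDist_le_dist_of_mem (mem_range_self c))⟩
  exact my_le_infDist ⟨σ 0, mem_range_self 0⟩ (by rintro z ⟨u, rfl⟩; exact hmin u)

/-- Projection lemma: `|x τ(b)| ≥ |x p| + |p τ(b)| - 4δ` for `p = τ(c)` a projection of `x`. -/
lemma projA {δ : ℝ} (hδ : 0 ≤ δ) (hyp : FourPointHyp X δ) {σ : ℝ → X} (hσ : IsGeodLine σ)
    {x : X} {c : ℝ} (hc : ∀ t, dist x (σ c) ≤ dist x (σ t)) (b : ℝ) :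
    dist x (σ c) + |c - b| - 4*δ ≤ dist x (σ b) := by
  set D := dist x (σ c) with hD
  set T := |c - b| with hT
  set dxb := dist x (σ b) with hdxb
  have hTb : dist (σ c) (σ b) = T := hσ c b
  have htri1 : dxb ≤ D + T := by
    have := dist_triangle x (σ c) (σ b); rw [hTb] at this; linarith
  have htri2 : D ≤ dxb + T := by
    have := dist_triangle x (σ b) (σ c)
    have h2 : dist (σ b) (σ c) = T := by rw [hσ b c, abs_sub_comm]
    rw [h2] at this; linarith
  set r := (D + T - dxb)/2 with hr
  have hr0 : 0 ≤ r := by simp only [hr]; linarith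
  have hrT : r ≤ T := by simp only [hr]; linarith
  rcases le_total c b with hcb | hcb
  · set u := c + r with hu
    have e1 : dist (σ u) (σ c) = r := by
      rw [hσ u c]; simp only [hu]; rw [show c + r - c = r by ring, abs_of_nonneg hr0]
    have e2 : dist (σ u) (σ b) = T - r := by
      rw [hσ u b]
      have hTe : T = b - c := by rw [hT, abs_of_nonpos (by linarith)]; ring
      rw [show u - b = -(T - r) by rw [hu, hTe]; ring, abs_neg, abs_of_nonneg (by linarith)]
    have key := hyp x (σ u) (σ c) (σ b)
    rw [hTb, e1, e2] at key
    have hxu : D ≤ dist x (σ u) := hc u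
    have hmax : max (dist x (σ c) + (T - r)) (r + dist x (σ b)) ≤ (D + T + dxb)/2 := by
      apply max_le <;> simp only [← hD, ← hdxb, hr] <;> linarith
    linarith
  · set u := c - r with hu
    have e1 : dist (σ u) (σ c) = r := by
      rw [hσ u c]; simp only [hu]
      rw [show c - r - c = -r by ring, abs_neg, abs_of_nonneg hr0]
    have e2 : dist (σ u) (σ b) = T - r := by
      rw [hσ u b]
      have hTe : T = c - b := by rw [hT, abs_of_nonneg (by linarith)]
      rw [show u - b = T - r by rw [hu, hTe]; ring, abs_of_nonneg (by linarith)]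
    have key := hyp x (σ u) (σ c) (σ b)
    rw [hTb, e1, e2] at key
    have hxu : D ≤ dist x (σ u) := hc u
    have hmax : max (dist x (σ c) + (T - r)) (r + dist x (σ b)) ≤ (D + T + dxb)/2 := by
      apply max_le <;> simp only [← hD, ← hdxb, hr] <;> linarith
    linarith

/-- Strong projection lemma: points projecting far apart. -/
lemma strong {δ : ℝ} (hδ : 0 ≤ δ) (hyp : FourPointHyp X δ) {σ : ℝ → X} (hσ : IsGeodLine σ)
    {x y : X} {cx cy : ℝ} (hx : ∀ t, dist x (σ cx) ≤ dist x (σ t))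
    (hy : ∀ t, dist y (σ cy) ≤ dist y (σ t)) (hgap : 5*δ < |cx - cy|) :
    dist x (σ cx) + dist y (σ cy) + |cx - cy| - 10*δ ≤ dist x y := by
  have A1 := projA hδ hyp hσ hx cy
  have A2 := projA hδ hyp hσ hy cx
  rw [abs_sub_comm cy cx] at A2
  have key := hyp x (σ cy) y (σ cx)
  have h1 : dist (σ cy) (σ cx) = |cx - cy| := by rw [hσ cy cx, abs_sub_comm]
  have h2 : dist (σ cy) y = dist y (σ cy) := dist_comm _ _
  rw [h1, h2] at key
  rcases max_cases (dist x y + |cx - cy|) (dist y (σ cy) + dist x (σ cx)) with ⟨hm, _⟩ | ⟨hm, _⟩ <;>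
    rw [hm] at key <;> linarith

/-- Stability: a geodesic line within finite distance of another is within `10δ`. -/
lemma stab {δ : ℝ} (hδ : 0 < δ) (hyp : FourPointHyp X δ) {σ ρ : ℝ → X}
    (hσ : IsGeodLine σ) (hρ : IsGeodLine ρ) {C : ℝ}
    (hC : ∀ t, infDist (σ t) (range ρ) ≤ C) (t₀ : ℝ) :
    infDist (σ t₀) (range ρ) ≤ 10*δ := by
  obtain ⟨c, hc, hceq⟩ := geod_min hρ (σ t₀)
  obtain ⟨am, ham, hameq⟩ := geod_min hρ (σ (t₀ - (2*C + 6*δ)))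
  obtain ⟨ap, hap, hapeq⟩ := geod_min hρ (σ (t₀ + (2*C + 6*δ)))
  set R := 2*C + 6*δ with hR
  have hC0 : 0 ≤ C := le_trans infDist_nonneg (hC t₀)
  have hR0 : 0 ≤ R := by simp only [hR]; linarith
  set u := σ t₀
  set vm := σ (t₀ - R)
  set vp := σ (t₀ + R)
  have hD0 : dist u (ρ c) ≤ C := hceq ▸ hC t₀
  have hEm : dist vm (ρ am) ≤ C := hameq ▸ hC _
  have hEp : dist vp (ρ ap) ≤ C := hapeq ▸ hC _
  have duvm : dist u vm = R := by
    rw [hσ t₀ (t₀ - R), show t₀ - (t₀ - R) = R by ring, abs_of_nonneg hR0]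
  have duvp : dist u vp = R := by
    rw [hσ t₀ (t₀ + R), show t₀ - (t₀ + R) = -R by ring, abs_neg, abs_of_nonneg hR0]
  have dvv : dist vm vp = 2*R := by
    rw [hσ (t₀ - R) (t₀ + R), show t₀ - R - (t₀ + R) = -(2*R) by ring, abs_neg,
      abs_of_nonneg (by linarith)]
  have hgm_lb : R - dist u (ρ c) - dist vm (ρ am) ≤ |c - am| := by
    have t1 : dist u vm ≤ dist u (ρ c) + dist (ρ c) (ρ am) + dist (ρ am) vm :=
      dist_triangle4 _ _ _ _
    rw [duvm, hρ c am, dist_comm (ρ am) vm] at t1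
    linarith
  have hgp_lb : R - dist u (ρ c) - dist vp (ρ ap) ≤ |c - ap| := by
    have t1 : dist u vp ≤ dist u (ρ c) + dist (ρ c) (ρ ap) + dist (ρ ap) vp :=
      dist_triangle4 _ _ _ _
    rw [duvp, hρ c ap, dist_comm (ρ ap) vp] at t1
    linarith
  have hgapm : 5*δ < |c - am| := by simp only [hR] at hgm_lb ⊢; linarith
  have hgapp : 5*δ < |c - ap| := by simp only [hR] at hgp_lb ⊢; linarith
  have Sm := strong hδ.le hyp hρ hc ham hgapm
  have Sp := strong hδ.le hyp hρ hc hap hgapp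
  rw [duvm] at Sm
  rw [duvp] at Sp
  have haa : 2*R - dist vm (ρ am) - dist vp (ρ ap) ≤ |am - ap| := by
    have t1 : dist vm vp ≤ dist vm (ρ am) + dist (ρ am) (ρ ap) + dist (ρ ap) vp :=
      dist_triangle4 _ _ _ _
    rw [dvv, hρ am ap, dist_comm (ρ ap) vp] at t1
    linarith
  have htri : |am - ap| ≤ |am - c| + |c - ap| := abs_sub_le am c ap
  rw [abs_sub_comm am c] at htri
  rw [← hceq]
  linarith


/-- Lower bound on the displacement of `ξ²`. -/
lemma dtwo {δ : ℝ} (hδ : 0 < δ) (hyp : FourPointHyp X δ) (hgeo : IsGeodesicSpace X)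
    (ξ : X ≃ᵢ X) {L : ℝ} (hLmin : ∀ x : X, L ≤ dist x (ξ x)) (hL300 : 300 * δ ≤ L)
    (z : X) : L + dist z (ξ z) - 4*δ ≤ dist z (ξ (ξ z)) := by
  obtain ⟨S, f, hf0, hfd, hiso, -⟩ := hgeo (ξ z) z
  set dw := dist (ξ z) z with hdw
  have hdw0 : 0 ≤ dw := dist_nonneg
  have hmem0 : (0:ℝ) ∈ Icc (0:ℝ) dw := ⟨le_refl _, hdw0⟩
  have hmemh : dw/2 ∈ Icc (0:ℝ) dw := ⟨by linarith, by linarith⟩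
  have hmemd : dw ∈ Icc (0:ℝ) dw := ⟨hdw0, le_refl _⟩
  set m := f (dw/2) with hm
  have h1 : dist (ξ z) m = dw/2 := by
    rw [hm, ← hf0]
    rw [hiso 0 hmem0 (dw/2) hmemh, abs_of_nonpos (by linarith)]
    ring
  have h2 : dist m z = dw/2 := by
    rw [hm, ← hfd]
    rw [hiso (dw/2) hmemh dw hmemd, abs_of_nonpos (by linarith)]
    ring
  have h3 : dist (ξ z) (ξ m) = dw/2 := by rw [ξ.dist_eq, dist_comm, h2]
  have h4 : dist (ξ m) (ξ (ξ z)) = dw/2 := by rw [ξ.dist_eq, dist_comm, h1]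
  have h5 : dist (ξ (ξ z)) (ξ z) = dw := by rw [ξ.dist_eq]
  set d2 := dist z (ξ (ξ z)) with hd2
  have c1 : dist z (ξ z) = dw := by rw [dist_comm]
  have c2 : dist (ξ (ξ z)) z = d2 := by rw [dist_comm]
  have c3 : dist m (ξ z) = dw/2 := by rw [dist_comm]; exact h1
  have c4 : dist (ξ m) (ξ z) = dw/2 := by rw [dist_comm]; exact h3
  have k1 := hyp m (ξ (ξ z)) z (ξ z)
  rw [c1, h2, h5, c2, c3] at k1
  have k2 := hyp m (ξ m) (ξ (ξ z)) (ξ z)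
  rw [h5, c4, h4, c3] at k2
  have hLm := hLmin m
  rw [c1]
  rcases max_cases (dist m (ξ (ξ z)) + dw/2) (dw/2 + dw/2) with ⟨e2, _⟩ | ⟨e2, _⟩ <;>
    rw [e2] at k2 <;>
    rcases max_cases (dw/2 + dw) (d2 + dw/2) with ⟨e1, _⟩ | ⟨e1, _⟩ <;>
    rw [e1] at k1 <;> linarith

/-- Displacement lower bound in terms of distance to the axis. -/
lemma disp {δ : ℝ} (hδ : 0 < δ) (hyp : FourPointHyp X δ) {τ : ℝ → X} (hτ : IsGeodLine τ)
    (ξ : X ≃ᵢ X) {L : ℝ} (hLmin : ∀ x : X, L ≤ dist x (ξ x)) (hL300 : 300 * δ ≤ L)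
    (h1 : ∀ u : ℝ, infDist (ξ (τ u)) (range τ) ≤ 10*δ)
    (h2 : ∀ u : ℝ, infDist (ξ.symm (τ u)) (range τ) ≤ 10*δ)
    (z : X) : 2 * infDist z (range τ) + L - 50*δ ≤ dist z (ξ z) := by
  obtain ⟨c, hc, hceq⟩ := geod_min hτ z
  obtain ⟨c', hc', hc'eq⟩ := geod_min hτ (ξ z)
  obtain ⟨e, he, heeq⟩ := geod_min hτ (ξ (τ c))
  set D := dist z (τ c) with hD
  set D' := dist (ξ z) (τ c') with hD'
  set Df := dist (ξ (τ c)) (τ e) with hDf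
  have hDf10 : Df ≤ 10*δ := heeq ▸ h1 c
  have hDD' : D ≤ D' + 10*δ := by
    have step : infDist z (range τ) ≤ infDist (ξ.symm (τ c')) (range τ) + dist z (ξ.symm (τ c')) :=
      infDist_le_infDist_add_dist
    have hzz : dist z (ξ.symm (τ c')) = D' := by
      have h' : dist (ξ z) (ξ (ξ.symm (τ c'))) = dist z (ξ.symm (τ c')) := ξ.dist_eq _ _
      rw [ξ.apply_symm_apply] at h'
      rw [← h']
    rw [hceq]
    rw [hzz] at step
    linarith [h2 c']
  have hM : L - 10*δ ≤ |c - e| := by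
    have t1 : dist (τ c) (ξ (τ c)) ≤ dist (τ c) (τ e) + dist (τ e) (ξ (τ c)) := dist_triangle _ _ _
    rw [hτ c e, dist_comm (τ e) (ξ (τ c))] at t1
    linarith [hLmin (τ c)]
  have hce' : |c' - e| ≤ 20*δ := by
    rcases le_or_gt (|c' - e|) (5*δ) with hle | hlt
    · linarith
    · have S := strong hδ.le hyp hτ hc' he hlt
      have hxx : dist (ξ z) (ξ (τ c)) = D := by rw [ξ.dist_eq]
      rw [hxx] at S
      linarith [dist_nonneg (x := ξ (τ c)) (y := τ e)]
  have hcc' : 5*δ < |c - c'| := by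
    have := abs_sub_le c c' e
    have h30 : L - 30*δ ≤ |c - c'| := by linarith
    linarith
  have S2 := strong hδ.le hyp hτ hc hc' hcc'
  have habs : L - 30*δ ≤ |c - c'| := by
    have := abs_sub_le c c' e
    linarith
  rw [← hceq]
  rw [← hD, ← hD'] at S2
  linarith

/-- Endgame arithmetic over `ℝ`, assuming `a ≤ c`. -/
lemma final_real_aux {δ ε L a b c s : ℝ} (hδ : 0 < δ) (hε : 0 < ε) (hεδ : ε < δ)
    (hL300 : 300 * δ ≤ L) (hac : a ≤ c)
    (h1 : L - 50*δ - ε ≤ |a - b|) (h2 : |a - b| ≤ L + 50*δ + 2*ε)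
    (h3 : L - 50*δ - ε ≤ |b - c|) (h4 : |b - c| ≤ L + 50*δ + 2*ε)
    (h5 : 2*L - 54*δ - ε ≤ |a - c|)
    (h6 : |s - b| ≤ |s - a| + 54*δ + ε) (h7 : |s - b| ≤ |s - c| + 54*δ + ε) :
    a ≤ s ∧ s ≤ c ∧ |b - s| ≤ L + 56*δ + ε := by
  have hacv : |a - c| = c - a := by rw [abs_of_nonpos (by linarith)]; ring
  rw [hacv] at h5
  have hab : a ≤ b := by
    by_contra hcon
    push_neg at hcon
    have : |b - c| = c - b := by rw [abs_of_nonpos (by linarith)]; ring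
    rw [this] at h4
    linarith
  have hbc : b ≤ c := by
    by_contra hcon
    push_neg at hcon
    have : |a - b| = b - a := by rw [abs_of_nonpos (by linarith)]; ring
    rw [this] at h2
    linarith
  have habv : |a - b| = b - a := by rw [abs_of_nonpos (by linarith)]; ring
  have hbcv : |b - c| = c - b := by rw [abs_of_nonpos (by linarith)]; ring
  rw [habv] at h1 h2
  rw [hbcv] at h3 h4
  have hsa : a ≤ s := by
    by_contra hcon
    push_neg at hcon
    have e1 : |s - b| = b - s := by rw [abs_of_nonpos (by linarith)]; ring
    have e2 : |s - a| = a - s := by rw [abs_of_nonpos (by linarith)]; ring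
    rw [e1, e2] at h6
    linarith
  have hsc : s ≤ c := by
    by_contra hcon
    push_neg at hcon
    have e1 : |s - b| = s - b := by rw [abs_of_nonneg (by linarith)]
    have e2 : |s - c| = s - c := by rw [abs_of_nonneg (by linarith)]
    rw [e1, e2] at h7
    linarith
  refine ⟨hsa, hsc, ?_⟩
  rcases le_total b s with hbs | hbs
  · rw [abs_of_nonpos (by linarith)]
    linarith
  · rw [abs_of_nonneg (by linarith)]
    linarith

lemma final_real {δ ε L a b c s : ℝ} (hδ : 0 < δ) (hε : 0 < ε) (hεδ : ε < δ)
    (hL300 : 300 * δ ≤ L)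
    (h1 : L - 50*δ - ε ≤ |a - b|) (h2 : |a - b| ≤ L + 50*δ + 2*ε)
    (h3 : L - 50*δ - ε ≤ |b - c|) (h4 : |b - c| ≤ L + 50*δ + 2*ε)
    (h5 : 2*L - 54*δ - ε ≤ |a - c|)
    (h6 : |s - b| ≤ |s - a| + 54*δ + ε) (h7 : |s - b| ≤ |s - c| + 54*δ + ε) :
    min a c ≤ s ∧ s ≤ max a c ∧ |b - s| ≤ L + 56*δ + ε := by
  rcases le_total a c with hac | hca
  · obtain ⟨u1, u2, u3⟩ := final_real_aux hδ hε hεδ hL300 hac h1 h2 h3 h4 h5 h6 h7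
    exact ⟨le_trans (min_le_left _ _) u1, le_trans u2 (le_max_right _ _), u3⟩
  · rw [abs_sub_comm a b] at h1 h2
    rw [abs_sub_comm b c] at h3 h4
    rw [abs_sub_comm a c] at h5
    obtain ⟨u1, u2, u3⟩ := final_real_aux hδ hε hεδ hL300 hca h3 h4 h1 h2 h5 h7 h6
    exact ⟨le_trans (min_le_right _ _) u1, le_trans u2 (le_max_left _ _), u3⟩

lemma zpow_succ_apply (ξ : X ≃ᵢ X) (n : ℤ) (x : X) : (ξ ^ (n+1)) x = ξ ((ξ ^ n) x) := by
  rw [add_comm, zpow_add, zpow_one]; rfl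

lemma zpow_comm_apply (ξ : X ≃ᵢ X) (n : ℤ) (x : X) : ξ ((ξ ^ n) x) = (ξ ^ n) (ξ x) := by
  have a1 : (ξ ^ (n+1)) x = ξ ((ξ ^ n) x) := zpow_succ_apply ξ n x
  have a2 : (ξ ^ (n+1)) x = (ξ ^ n) (ξ x) := by rw [zpow_add, zpow_one]; rfl
  rw [← a1, a2]

lemma orbit_succ (ξ : X ≃ᵢ X) (O : X) {i : ℤ} (hi : i ≠ 0) :
    orbitPt ξ O (if i = -1 then 1 else i+1) = ξ (orbitPt ξ O i) := by
  rcases lt_trichotomy i 0 with hneg | h0 | hpos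
  · by_cases hm1 : i = -1
    · subst hm1
      rw [if_pos rfl]
      have l1 : orbitPt ξ O 1 = (ξ ^ ((1:ℤ) - 1)) O := by
        unfold orbitPt; rw [if_pos (by norm_num : (0:ℤ) < 1)]
      have l2 : orbitPt ξ O (-1) = (ξ ^ (-1:ℤ)) O := by
        unfold orbitPt; rw [if_neg (by norm_num : ¬ (0:ℤ) < -1)]
      rw [l1, l2, show (1:ℤ) - 1 = (-1) + 1 by ring, zpow_succ_apply]
    · have hlt : i < -1 := lt_of_le_of_ne (by omega) hm1
      rw [if_neg hm1]
      simp only [orbitPt, if_neg (by omega : ¬ (0:ℤ) < i+1), if_neg (by omega : ¬ (0:ℤ) < i)]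
      rw [zpow_succ_apply]
  · exact absurd h0 hi
  · have hm1 : i ≠ -1 := by omega
    rw [if_neg hm1]
    simp only [orbitPt, if_pos (by omega : (0:ℤ) < i+1), if_pos hpos]
    rw [show i + 1 - 1 = (i - 1) + 1 by ring, zpow_succ_apply]

lemma orbit_disp (ξ : X ≃ᵢ X) (O : X) (j : ℤ) :
    dist (orbitPt ξ O j) (ξ (orbitPt ξ O j)) = dist O (ξ O) := by
  have key : ∀ n : ℤ, dist ((ξ^n) O) (ξ ((ξ^n) O)) = dist O (ξ O) := by
    intro n
    rw [zpow_comm_apply, (ξ^n).dist_eq]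
  unfold orbitPt
  split_ifs <;> apply key

end Stmt12Aux

/-- In the Voronoi-cell setup along the axis of a hyperbolic isometry `ξ`
(`L = dis(ξ) ≥ 300δ`, orbit points `xᵢ` with projections `pᵢ = τ(tᵢ)` to the axis
`τ`, Voronoi cells `Dᵢ`): if `y ∈ Dᵢ` and `q` is a projection of `y` to `τ`, then
`q` lies between the points `p_{i₋}` and `p_{i₊}` adjacent to `pᵢ`; in particular
`|pᵢ q| ≤ L + 56δ + ε`. -/
theorem stmt12 {X : Type*} [MetricSpace X] [ProperSpace X] (δ ε L : ℝ)
    (hδ : 0 < δ) (hε : 0 < ε) (hεδ : ε < δ)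
    (hyp : FourPointHyp X δ) (hgeo : IsGeodesicSpace X)
    (ξ : X ≃ᵢ X) (hhyp : IsHypIsom ξ) (τ : ℝ → X) (hax : IsAxis ξ τ)
    (hL : L = ⨅ x : X, dist x (ξ x)) (hL300 : 300 * δ ≤ L)
    (O : X) (hO : dist O (ξ O) ≤ L + ε)
    (t : ℤ → ℝ) (p : ℤ → X) (hpt : ∀ i : ℤ, i ≠ 0 → p i = τ (t i))
    (hp : ∀ i : ℤ, i ≠ 0 →
      dist (orbitPt ξ O i) (p i) = infDist (orbitPt ξ O i) (range τ))
    (i : ℤ) (hi : i ≠ 0) (y : X) (hy : y ∈ vorCell ξ O i)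
    (q : X) (hq : q ∈ range τ) (hqproj : dist y q = infDist y (range τ)) :
    (∃ s : ℝ, τ s = q ∧
      min (t (if i = 1 then -1 else i - 1)) (t (if i = -1 then 1 else i + 1)) ≤ s ∧
      s ≤ max (t (if i = 1 then -1 else i - 1)) (t (if i = -1 then 1 else i + 1))) ∧
    dist (p i) q ≤ L + 56 * δ + ε := by
  classical
  obtain ⟨hτ, C, hC1, hC2⟩ := hax
  have hLmin : ∀ x : X, L ≤ dist x (ξ x) := by
    intro x
    rw [hL]
    exact ciInf_le ⟨0, by rintro r ⟨w, rfl⟩; exact dist_nonneg⟩ x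
  have hline1 : IsGeodLine (fun u => ξ (τ u)) := by
    intro u v; rw [ξ.dist_eq]; exact hτ u v
  have h10a : ∀ u : ℝ, infDist (ξ (τ u)) (range τ) ≤ 10*δ :=
    fun u => Stmt12Aux.stab hδ hyp hline1 hτ hC1 u
  have hline2 : IsGeodLine (fun u => ξ.symm (τ u)) := by
    intro u v; rw [ξ.symm.dist_eq]; exact hτ u v
  have hC2' : ∀ u : ℝ, infDist (ξ.symm (τ u)) (range τ) ≤ C := by
    intro u
    have him : (⇑ξ.symm) '' (range fun s => ξ (τ s)) = range τ := by
      rw [show (range fun s => ξ (τ s)) = range (⇑ξ ∘ τ) from rfl, range_comp, ← image_comp]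
      simp [Function.comp_def]
    calc infDist (ξ.symm (τ u)) (range τ)
        = infDist (ξ.symm (τ u)) ((⇑ξ.symm) '' (range fun s => ξ (τ s))) := by rw [him]
      _ = infDist (τ u) (range fun s => ξ (τ s)) := infDist_image ξ.symm.isometry
      _ ≤ C := hC2 u
  have h10b : ∀ u : ℝ, infDist (ξ.symm (τ u)) (range τ) ≤ 10*δ :=
    fun u => Stmt12Aux.stab hδ hyp hline2 hτ hC2' u
  have hdisp := Stmt12Aux.disp hδ hyp hτ ξ hLmin hL300 h10a h10b
  -- `D`-bounds for the orbit points
  have hDb : ∀ j : ℤ, j ≠ 0 → dist (orbitPt ξ O j) (p j) ≤ (ε + 50*δ)/2 := by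
    intro j hj
    have h1' := hdisp (orbitPt ξ O j)
    rw [← hp j hj, Stmt12Aux.orbit_disp ξ O j] at h1'
    linarith [hO]
  -- adjacent indices
  set im := if i = 1 then -1 else i - 1 with him_def
  set ip := if i = -1 then 1 else i + 1 with hip_def
  have him0 : im ≠ 0 := by rw [him_def]; split_ifs <;> omega
  have hip0 : ip ≠ 0 := by rw [hip_def]; split_ifs <;> omega
  have hsucc_im : (if im = -1 then 1 else im + 1) = i := by
    rw [him_def]; split_ifs <;> omega
  have hx_im : orbitPt ξ O i = ξ (orbitPt ξ O im) := by
    have hh := Stmt12Aux.orbit_succ ξ O him0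
    rw [hsucc_im] at hh
    exact hh
  have hx_ip : orbitPt ξ O ip = ξ (orbitPt ξ O i) := by
    have hh := Stmt12Aux.orbit_succ ξ O hi
    rw [← hip_def] at hh
    exact hh
  have hd0L : L ≤ dist O (ξ O) := hLmin O
  have dd1 : dist (orbitPt ξ O im) (orbitPt ξ O i) = dist O (ξ O) := by
    rw [hx_im]; exact Stmt12Aux.orbit_disp ξ O im
  have dd2 : dist (orbitPt ξ O i) (orbitPt ξ O ip) = dist O (ξ O) := by
    rw [hx_ip, hx_im]; exact Stmt12Aux.orbit_disp ξ O i ▸ (by rw [← hx_im])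
  have dd3 : L + dist O (ξ O) - 4*δ ≤ dist (orbitPt ξ O im) (orbitPt ξ O ip) := by
    have h2' : orbitPt ξ O ip = ξ (ξ (orbitPt ξ O im)) := by rw [hx_ip, hx_im]
    rw [h2']
    have hh := Stmt12Aux.dtwo hδ hyp hgeo ξ hLmin hL300 (orbitPt ξ O im)
    rw [Stmt12Aux.orbit_disp ξ O im] at hh
    exact hh
  have hDm := hDb im him0
  have hDi := hDb i hi
  have hDp := hDb ip hip0
  have hpa : p im = τ (t im) := hpt im him0
  have hpb : p i = τ (t i) := hpt i hi
  have hpc : p ip = τ (t ip) := hpt ip hip0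
  -- upper and lower bounds on the projection gaps
  have fab_u : |t im - t i| ≤ dist (orbitPt ξ O im) (p im) + dist O (ξ O)
      + dist (orbitPt ξ O i) (p i) := by
    have t1 := dist_triangle4 (τ (t im)) (orbitPt ξ O im) (orbitPt ξ O i) (τ (t i))
    rw [hτ (t im) (t i), dd1, dist_comm (τ (t im)) (orbitPt ξ O im), ← hpa, ← hpb] at t1
    linarith
  have fab_l : dist O (ξ O) ≤ dist (orbitPt ξ O im) (p im) + |t im - t i|
      + dist (orbitPt ξ O i) (p i) := by
    have t1 := dist_triangle4 (orbitPt ξ O im) (τ (t im)) (τ (t i)) (orbitPt ξ O i)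
    rw [hτ (t im) (t i), dd1, dist_comm (τ (t i)) (orbitPt ξ O i), ← hpa, ← hpb] at t1
    linarith
  have fbc_u : |t i - t ip| ≤ dist (orbitPt ξ O i) (p i) + dist O (ξ O)
      + dist (orbitPt ξ O ip) (p ip) := by
    have t1 := dist_triangle4 (τ (t i)) (orbitPt ξ O i) (orbitPt ξ O ip) (τ (t ip))
    rw [hτ (t i) (t ip), dd2, dist_comm (τ (t i)) (orbitPt ξ O i), ← hpb, ← hpc] at t1
    linarith
  have fbc_l : dist O (ξ O) ≤ dist (orbitPt ξ O i) (p i) + |t i - t ip|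
      + dist (orbitPt ξ O ip) (p ip) := by
    have t1 := dist_triangle4 (orbitPt ξ O i) (τ (t i)) (τ (t ip)) (orbitPt ξ O ip)
    rw [hτ (t i) (t ip), dd2, dist_comm (τ (t ip)) (orbitPt ξ O ip), ← hpb, ← hpc] at t1
    linarith
  have fac_l : dist (orbitPt ξ O im) (orbitPt ξ O ip) ≤ dist (orbitPt ξ O im) (p im)
      + |t im - t ip| + dist (orbitPt ξ O ip) (p ip) := by
    have t1 := dist_triangle4 (orbitPt ξ O im) (τ (t im)) (τ (t ip)) (orbitPt ξ O ip)
    rw [hτ (t im) (t ip), dist_comm (τ (t ip)) (orbitPt ξ O ip), ← hpa, ← hpc] at t1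
    linarith
  -- the projection point of y
  obtain ⟨s, hs⟩ := hq
  have hqmin : ∀ u : ℝ, dist y (τ s) ≤ dist y (τ u) := by
    intro u
    rw [hs, hqproj]
    exact infDist_le_dist_of_mem ⟨u, rfl⟩
  have pA := Stmt12Aux.projA hδ.le hyp hτ hqmin (t i)
  -- Voronoi comparisons
  have voroF : ∀ j : ℤ, j ≠ 0 → |s - t i| ≤ |s - t j| + dist (orbitPt ξ O i) (p i)
      + dist (orbitPt ξ O j) (p j) + 4*δ := by
    intro j hj
    have voro : dist y (orbitPt ξ O i) ≤ dist y (orbitPt ξ O j) := hy j hj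
    have tri_i : dist y (τ (t i)) ≤ dist y (orbitPt ξ O i) + dist (orbitPt ξ O i) (p i) := by
      have := dist_triangle y (orbitPt ξ O i) (τ (t i))
      rw [← hpb]; rw [← hpb] at this; exact this
    have tri_j : dist y (orbitPt ξ O j) ≤ dist y (τ s) + |s - t j|
        + dist (orbitPt ξ O j) (p j) := by
      have t1 := dist_triangle4 y (τ s) (τ (t j)) (orbitPt ξ O j)
      rw [hτ s (t j), dist_comm (τ (t j)) (orbitPt ξ O j), ← hpt j hj] at t1
      linarith
    linarith
  have h6 := voroF im him0
  have h7 := voroF ip hip0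
  have key := Stmt12Aux.final_real (a := t im) (b := t i) (c := t ip) (s := s)
    hδ hε hεδ hL300
    (by linarith) (by linarith [hO]) (by linarith) (by linarith [hO])
    (by linarith [hO]) (by linarith) (by linarith)
  obtain ⟨g1, g2, g3⟩ := key
  refine ⟨⟨s, hs, g1, g2⟩, ?_⟩
  rw [hpb, ← hs, hτ (t i) s]
  exact g3
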